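/- arXiv:1105.5482 — 3 statements merged into one kernel-verified Lean document; each statement's English description precedes it below -/
import Mathlib

section
/- Let $Y$ be a positive definite real symmetric $2\times 2$ matrix with entries $y, v, y'$ (so $Y = \begin{pmatrix} y & v \\ v & y' \end{pmatrix}$), let $k$ be an integer, and $s \in \mathbb{C}$. Then the matrix-valued Laplace operator $\Omega_{\frac12, k-\frac12} = -4Y\,{}^t(Y\partial_{\bar Z})\partial_Z - 2i(k-\tfrac12)Y\partial_Z + i Y\partial_{\bar Z}$ applied to the function $Z \mapsto (\det Y)^s$ satisfies $\Omega_{\frac12, k-\frac12}\big((\det Y)^s\big) = -s\big(s - (\tfrac32 - k)\big)(\det Y)^s I_2$. In particular, $(\det Y)^s$ lies in the kernel of $\Omega_{\frac12, k-\frac12}$ if and only if $s = 0$ or $s = \tfrac32 - k$. -/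
open Finset

/-- Wirtinger derivative `∂_w = ½(∂_a - i ∂_b)` of `f : ℂ → ℂ` at a point. -/
noncomputable def wD (f : ℂ → ℂ) (w : ℂ) : ℂ :=
  (1 / 2) * (fderiv ℝ f w 1 - Complex.I * fderiv ℝ f w Complex.I)

/-- Conjugate Wirtinger derivative `∂_w̄ = ½(∂_a + i ∂_b)`. -/
noncomputable def wDbar (f : ℂ → ℂ) (w : ℂ) : ℂ :=
  (1 / 2) * (fderiv ℝ f w 1 + Complex.I * fderiv ℝ f w Complex.I)

noncomputable def dTau (F : ℂ → ℂ → ℂ → ℂ) : ℂ → ℂ → ℂ → ℂ :=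
  fun τ z τ' => wD (fun w => F w z τ') τ
noncomputable def dZvar (F : ℂ → ℂ → ℂ → ℂ) : ℂ → ℂ → ℂ → ℂ :=
  fun τ z τ' => wD (fun w => F τ w τ') z
noncomputable def dTauP (F : ℂ → ℂ → ℂ → ℂ) : ℂ → ℂ → ℂ → ℂ :=
  fun τ z τ' => wD (fun w => F τ z w) τ'
noncomputable def dTauBar (F : ℂ → ℂ → ℂ → ℂ) : ℂ → ℂ → ℂ → ℂ :=
  fun τ z τ' => wDbar (fun w => F w z τ') τ
noncomputable def dZvarBar (F : ℂ → ℂ → ℂ → ℂ) : ℂ → ℂ → ℂ → ℂ :=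
  fun τ z τ' => wDbar (fun w => F τ w τ') z
noncomputable def dTauPBar (F : ℂ → ℂ → ℂ → ℂ) : ℂ → ℂ → ℂ → ℂ :=
  fun τ z τ' => wDbar (fun w => F τ z w) τ'

/-- The matrix of operators `∂_Z = (∂_τ, ½∂_z; ½∂_z, ∂_τ')`, entrywise. -/
noncomputable def DZop : Fin 2 → Fin 2 → (ℂ → ℂ → ℂ → ℂ) → (ℂ → ℂ → ℂ → ℂ) :=
  fun i j F =>
    if i = 0 then
      (if j = 0 then dTau F else fun τ z τ' => (1 / 2) * dZvar F τ z τ')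
    else
      (if j = 0 then (fun τ z τ' => (1 / 2) * dZvar F τ z τ') else dTauP F)

/-- The matrix of operators `∂_Z̄`, entrywise. -/
noncomputable def DZbarop : Fin 2 → Fin 2 → (ℂ → ℂ → ℂ → ℂ) → (ℂ → ℂ → ℂ → ℂ) :=
  fun i j F =>
    if i = 0 then
      (if j = 0 then dTauBar F else fun τ z τ' => (1 / 2) * dZvarBar F τ z τ')
    else
      (if j = 0 then (fun τ z τ' => (1 / 2) * dZvarBar F τ z τ') else dTauPBar F)

/-- `Y = Im Z = (y, v; v, y')`. -/
noncomputable def Ymat (τ z τ' : ℂ) : Matrix (Fin 2) (Fin 2) ℝ :=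
  !![τ.im, z.im; z.im, τ'.im]

/-- The `(i,j)` entry of the matrix-valued Laplace operator
`Ω_{α,β} = -4 Y ᵗ(Y ∂_Z̄) ∂_Z - 2iβ Y ∂_Z + 2iα Y ∂_Z̄` applied to `F`. -/
noncomputable def OmegaEntry (α β : ℂ) (F : ℂ → ℂ → ℂ → ℂ) (i j : Fin 2)
    (τ z τ' : ℂ) : ℂ :=
  (-4) * ∑ a : Fin 2, ((Ymat τ z τ' i a : ℝ) : ℂ) *
      (∑ c : Fin 2, ∑ d : Fin 2, ((Ymat τ z τ' c d : ℝ) : ℂ) *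
        DZbarop d a (DZop c j F) τ z τ')
    - 2 * Complex.I * β * ∑ a : Fin 2, ((Ymat τ z τ' i a : ℝ) : ℂ) * DZop a j F τ z τ'
    + 2 * Complex.I * α * ∑ a : Fin 2, ((Ymat τ z τ' i a : ℝ) : ℂ) * DZbarop a j F τ z τ'

noncomputable def detY (τ z τ' : ℂ) : ℝ := τ.im * τ'.im - z.im ^ 2


lemma hasFDerivAt_im_comp (φ : ℝ → ℂ) (c : ℂ) (w : ℂ) (h : HasDerivAt φ c w.im) :
    HasFDerivAt (fun u : ℂ => φ u.im)
      ((ContinuousLinearMap.smulRight (1 : ℝ →L[ℝ] ℝ) c).comp Complex.imCLM) w :=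
  (h.hasFDerivAt).comp w Complex.imCLM.hasFDerivAt

lemma wD_apply (φ : ℝ → ℂ) (c : ℂ) (w : ℂ) (h : HasDerivAt φ c w.im) :
    wD (fun u => φ u.im) w = -(Complex.I / 2) * c := by
  rw [wD, (hasFDerivAt_im_comp φ c w h).fderiv]
  simp
  ring

lemma wDbar_apply (φ : ℝ → ℂ) (c : ℂ) (w : ℂ) (h : HasDerivAt φ c w.im) :
    wDbar (fun u => φ u.im) w = (Complex.I / 2) * c := by
  rw [wDbar, (hasFDerivAt_im_comp φ c w h).fderiv]
  simp
  ring

lemma wDbar_congr {f g : ℂ → ℂ} {w : ℂ} (h : f =ᶠ[nhds w] g) : wDbar f w = wDbar g w := by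
  rw [wDbar, wDbar, h.fderiv_eq]

lemma hda_gen0 (s : ℂ) (g : ℝ → ℝ) (g' x : ℝ) (hg : HasDerivAt g g' x) (h : 0 < g x) :
    HasDerivAt (fun t => ((g t : ℝ) : ℂ) ^ s) (s * ((g x : ℝ) : ℂ) ^ (s - 1) * (g' : ℂ)) x := by
  have h1 : HasDerivAt (fun t : ℝ => ((g t : ℝ) : ℂ)) ((g' : ℝ) : ℂ) x := hg.ofReal_comp
  have h2 : HasDerivAt (fun w : ℂ => w ^ s) (s * ((g x : ℝ) : ℂ) ^ (s - 1)) ((g x : ℝ) : ℂ) :=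
    (Complex.hasStrictDerivAt_cpow_const (Complex.ofReal_mem_slitPlane.2 h)).hasDerivAt
  have h3 := HasDerivAt.scomp x h2 h1
  rw [smul_eq_mul] at h3
  have h4 : HasDerivAt (fun t => ((g t : ℝ) : ℂ) ^ s)
      ((g' : ℂ) * (s * ((g x : ℝ) : ℂ) ^ (s - 1))) x := h3
  have he : (g' : ℂ) * (s * ((g x : ℝ) : ℂ) ^ (s - 1))
      = s * ((g x : ℝ) : ℂ) ^ (s - 1) * (g' : ℂ) := by ring
  exact he ▸ h4

lemma hda_gen (sexp C : ℂ) (g L : ℝ → ℝ) (g' L' x : ℝ) (hg : HasDerivAt g g' x)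
    (hL : HasDerivAt L L' x) (h : 0 < g x) :
    HasDerivAt (fun t => C * (((g t : ℝ) : ℂ) ^ sexp * ((L t : ℝ) : ℂ)))
      (C * (sexp * ((g x : ℝ) : ℂ) ^ (sexp - 1) * (g' : ℂ) * ((L x : ℝ) : ℂ)
        + ((g x : ℝ) : ℂ) ^ sexp * (L' : ℂ))) x :=
  ((hda_gen0 sexp g g' x hg h).mul hL.ofReal_comp).const_mul C

noncomputable def Fs (s : ℂ) : ℂ → ℂ → ℂ → ℂ := fun a b c => ((detY a b c : ℝ) : ℂ) ^ s

lemma evT (τ z τ' : ℂ) (h : 0 < detY τ z τ') :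
    ∀ᶠ w in nhds τ, 0 < detY w z τ' := by
  have hc : Continuous (fun w : ℂ => detY w z τ') := by
    simp only [detY]; fun_prop
  exact continuousAt_const.eventually_lt hc.continuousAt h

lemma evZ (τ z τ' : ℂ) (h : 0 < detY τ z τ') :
    ∀ᶠ w in nhds z, 0 < detY τ w τ' := by
  have hc : Continuous (fun w : ℂ => detY τ w τ') := by
    simp only [detY]; fun_prop
  exact continuousAt_const.eventually_lt hc.continuousAt h

lemma evP (τ z τ' : ℂ) (h : 0 < detY τ z τ') :
    ∀ᶠ w in nhds τ', 0 < detY τ z w := by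
  have hc : Continuous (fun w : ℂ => detY τ z w) := by
    simp only [detY]; fun_prop
  exact continuousAt_const.eventually_lt hc.continuousAt h

lemma fd_T (s : ℂ) (τ z τ' : ℂ) (h : 0 < detY τ z τ') :
    dTau (Fs s) τ z τ' = -(Complex.I / 2) * (s * ((τ.im * τ'.im - z.im ^ 2 : ℝ) : ℂ) ^ (s - 1) * ((τ'.im : ℝ) : ℂ)) := by
  have hg : HasDerivAt (fun t : ℝ => t * τ'.im - z.im ^ 2) (τ'.im) τ.im := by
    simpa using ((hasDerivAt_id τ.im).mul_const τ'.im).sub_const (z.im ^ 2)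
  exact wD_apply _ _ _ (hda_gen0 s (fun t : ℝ => t * τ'.im - z.im ^ 2) (τ'.im) τ.im hg h)

lemma fdb_T (s : ℂ) (τ z τ' : ℂ) (h : 0 < detY τ z τ') :
    dTauBar (Fs s) τ z τ' = (Complex.I / 2) * (s * ((τ.im * τ'.im - z.im ^ 2 : ℝ) : ℂ) ^ (s - 1) * ((τ'.im : ℝ) : ℂ)) := by
  have hg : HasDerivAt (fun t : ℝ => t * τ'.im - z.im ^ 2) (τ'.im) τ.im := by
    simpa using ((hasDerivAt_id τ.im).mul_const τ'.im).sub_const (z.im ^ 2)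
  exact wDbar_apply _ _ _ (hda_gen0 s (fun t : ℝ => t * τ'.im - z.im ^ 2) (τ'.im) τ.im hg h)

lemma fd_Z (s : ℂ) (τ z τ' : ℂ) (h : 0 < detY τ z τ') :
    dZvar (Fs s) τ z τ' = -(Complex.I / 2) * (s * ((τ.im * τ'.im - z.im ^ 2 : ℝ) : ℂ) ^ (s - 1) * ((-(2 * z.im) : ℝ) : ℂ)) := by
  have hg : HasDerivAt (fun t : ℝ => τ.im * τ'.im - t ^ 2) (-(2 * z.im)) z.im := by
    simpa using (hasDerivAt_pow 2 z.im).const_sub (τ.im * τ'.im)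
  exact wD_apply _ _ _ (hda_gen0 s (fun t : ℝ => τ.im * τ'.im - t ^ 2) (-(2 * z.im)) z.im hg h)

lemma fdb_Z (s : ℂ) (τ z τ' : ℂ) (h : 0 < detY τ z τ') :
    dZvarBar (Fs s) τ z τ' = (Complex.I / 2) * (s * ((τ.im * τ'.im - z.im ^ 2 : ℝ) : ℂ) ^ (s - 1) * ((-(2 * z.im) : ℝ) : ℂ)) := by
  have hg : HasDerivAt (fun t : ℝ => τ.im * τ'.im - t ^ 2) (-(2 * z.im)) z.im := by
    simpa using (hasDerivAt_pow 2 z.im).const_sub (τ.im * τ'.im)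
  exact wDbar_apply _ _ _ (hda_gen0 s (fun t : ℝ => τ.im * τ'.im - t ^ 2) (-(2 * z.im)) z.im hg h)

lemma fd_P (s : ℂ) (τ z τ' : ℂ) (h : 0 < detY τ z τ') :
    dTauP (Fs s) τ z τ' = -(Complex.I / 2) * (s * ((τ.im * τ'.im - z.im ^ 2 : ℝ) : ℂ) ^ (s - 1) * ((τ.im : ℝ) : ℂ)) := by
  have hg : HasDerivAt (fun t : ℝ => τ.im * t - z.im ^ 2) (τ.im) τ'.im := by
    simpa using ((hasDerivAt_id τ'.im).const_mul τ.im).sub_const (z.im ^ 2)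
  exact wD_apply _ _ _ (hda_gen0 s (fun t : ℝ => τ.im * t - z.im ^ 2) (τ.im) τ'.im hg h)

lemma fdb_P (s : ℂ) (τ z τ' : ℂ) (h : 0 < detY τ z τ') :
    dTauPBar (Fs s) τ z τ' = (Complex.I / 2) * (s * ((τ.im * τ'.im - z.im ^ 2 : ℝ) : ℂ) ^ (s - 1) * ((τ.im : ℝ) : ℂ)) := by
  have hg : HasDerivAt (fun t : ℝ => τ.im * t - z.im ^ 2) (τ.im) τ'.im := by
    simpa using ((hasDerivAt_id τ'.im).const_mul τ.im).sub_const (z.im ^ 2)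
  exact wDbar_apply _ _ _ (hda_gen0 s (fun t : ℝ => τ.im * t - z.im ^ 2) (τ.im) τ'.im hg h)

lemma sd_TT (s : ℂ) (τ z τ' : ℂ) (h : 0 < detY τ z τ') :
    dTauBar (dTau (Fs s)) τ z τ' = (1/4 : ℂ) * s * (s - 1) * ((τ.im * τ'.im - z.im ^ 2 : ℝ) : ℂ) ^ (s - 1 - 1) * (τ'.im : ℂ) * (τ'.im : ℂ) := by
  have hev : (fun w => (dTau (Fs s)) w z τ') =ᶠ[nhds τ]
      (fun u : ℂ => (-(Complex.I / 2) * s) * (((u.im * τ'.im - z.im ^ 2 : ℝ) : ℂ) ^ (s - 1) * ((τ'.im : ℝ) : ℂ))) := by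
    filter_upwards [evT τ z τ' h] with w hw
    simp only [fd_T s w z τ' hw]
    push_cast
    ring
  have hg : HasDerivAt (fun t : ℝ => t * τ'.im - z.im ^ 2) (τ'.im) τ.im := by
    simpa using ((hasDerivAt_id τ.im).mul_const τ'.im).sub_const (z.im ^ 2)
  have hL : HasDerivAt (fun _ : ℝ => τ'.im) (0:ℝ) τ.im := hasDerivAt_const τ.im _
  have hd := hda_gen (s - 1) (-(Complex.I / 2) * s) (fun t : ℝ => t * τ'.im - z.im ^ 2) (fun _ : ℝ => τ'.im) (τ'.im) (0:ℝ) τ.im hg hL h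
  have key : dTauBar (dTau (Fs s)) τ z τ' = _ := (wDbar_congr hev).trans (wDbar_apply _ _ _ hd)
  rw [key]
  push_cast
  ring_nf
  simp only [Complex.I_sq]
  push_cast
  ring

lemma sd_TZ (s : ℂ) (τ z τ' : ℂ) (h : 0 < detY τ z τ') :
    dTauBar (fun a b c => 1 / 2 * dZvar (Fs s) a b c) τ z τ' = -(1/4 : ℂ) * s * (s - 1) * ((τ.im * τ'.im - z.im ^ 2 : ℝ) : ℂ) ^ (s - 1 - 1) * (z.im : ℂ) * (τ'.im : ℂ) := by
  have hev : (fun w => (fun a b c => 1 / 2 * dZvar (Fs s) a b c) w z τ') =ᶠ[nhds τ]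
      (fun u : ℂ => ((1 / 2 : ℂ) * (-(Complex.I / 2) * s)) * (((u.im * τ'.im - z.im ^ 2 : ℝ) : ℂ) ^ (s - 1) * ((-(2 * z.im) : ℝ) : ℂ))) := by
    filter_upwards [evT τ z τ' h] with w hw
    simp only [fd_Z s w z τ' hw]
    push_cast
    ring
  have hg : HasDerivAt (fun t : ℝ => t * τ'.im - z.im ^ 2) (τ'.im) τ.im := by
    simpa using ((hasDerivAt_id τ.im).mul_const τ'.im).sub_const (z.im ^ 2)
  have hL : HasDerivAt (fun _ : ℝ => -(2 * z.im)) (0:ℝ) τ.im := hasDerivAt_const τ.im _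
  have hd := hda_gen (s - 1) ((1 / 2 : ℂ) * (-(Complex.I / 2) * s)) (fun t : ℝ => t * τ'.im - z.im ^ 2) (fun _ : ℝ => -(2 * z.im)) (τ'.im) (0:ℝ) τ.im hg hL h
  have key : dTauBar (fun a b c => 1 / 2 * dZvar (Fs s) a b c) τ z τ' = _ := (wDbar_congr hev).trans (wDbar_apply _ _ _ hd)
  rw [key]
  push_cast
  ring_nf
  simp only [Complex.I_sq]
  push_cast
  ring

lemma sd_TP (s : ℂ) (τ z τ' : ℂ) (h : 0 < detY τ z τ') :
    dTauBar (dTauP (Fs s)) τ z τ' = (1/4 : ℂ) * s * ((s - 1) * ((τ.im * τ'.im - z.im ^ 2 : ℝ) : ℂ) ^ (s - 1 - 1) * (τ.im : ℂ) * (τ'.im : ℂ) + ((τ.im * τ'.im - z.im ^ 2 : ℝ) : ℂ) ^ (s - 1)) := by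
  have hev : (fun w => (dTauP (Fs s)) w z τ') =ᶠ[nhds τ]
      (fun u : ℂ => (-(Complex.I / 2) * s) * (((u.im * τ'.im - z.im ^ 2 : ℝ) : ℂ) ^ (s - 1) * ((u.im : ℝ) : ℂ))) := by
    filter_upwards [evT τ z τ' h] with w hw
    simp only [fd_P s w z τ' hw]
    push_cast
    ring
  have hg : HasDerivAt (fun t : ℝ => t * τ'.im - z.im ^ 2) (τ'.im) τ.im := by
    simpa using ((hasDerivAt_id τ.im).mul_const τ'.im).sub_const (z.im ^ 2)
  have hL : HasDerivAt (fun t : ℝ => t) (1:ℝ) τ.im := hasDerivAt_id τ.im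
  have hd := hda_gen (s - 1) (-(Complex.I / 2) * s) (fun t : ℝ => t * τ'.im - z.im ^ 2) (fun t : ℝ => t) (τ'.im) (1:ℝ) τ.im hg hL h
  have key : dTauBar (dTauP (Fs s)) τ z τ' = _ := (wDbar_congr hev).trans (wDbar_apply _ _ _ hd)
  rw [key]
  push_cast
  ring_nf
  simp only [Complex.I_sq]
  push_cast
  ring

lemma sd_ZT (s : ℂ) (τ z τ' : ℂ) (h : 0 < detY τ z τ') :
    dZvarBar (dTau (Fs s)) τ z τ' = -(1/2 : ℂ) * s * (s - 1) * ((τ.im * τ'.im - z.im ^ 2 : ℝ) : ℂ) ^ (s - 1 - 1) * (z.im : ℂ) * (τ'.im : ℂ) := by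
  have hev : (fun w => (dTau (Fs s)) τ w τ') =ᶠ[nhds z]
      (fun u : ℂ => (-(Complex.I / 2) * s) * (((τ.im * τ'.im - u.im ^ 2 : ℝ) : ℂ) ^ (s - 1) * ((τ'.im : ℝ) : ℂ))) := by
    filter_upwards [evZ τ z τ' h] with w hw
    simp only [fd_T s τ w τ' hw]
    push_cast
    ring
  have hg : HasDerivAt (fun t : ℝ => τ.im * τ'.im - t ^ 2) (-(2 * z.im)) z.im := by
    simpa using (hasDerivAt_pow 2 z.im).const_sub (τ.im * τ'.im)
  have hL : HasDerivAt (fun _ : ℝ => τ'.im) (0:ℝ) z.im := hasDerivAt_const z.im _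
  have hd := hda_gen (s - 1) (-(Complex.I / 2) * s) (fun t : ℝ => τ.im * τ'.im - t ^ 2) (fun _ : ℝ => τ'.im) (-(2 * z.im)) (0:ℝ) z.im hg hL h
  have key : dZvarBar (dTau (Fs s)) τ z τ' = _ := (wDbar_congr hev).trans (wDbar_apply _ _ _ hd)
  rw [key]
  push_cast
  ring_nf
  simp only [Complex.I_sq]
  push_cast
  ring

lemma sd_ZZ (s : ℂ) (τ z τ' : ℂ) (h : 0 < detY τ z τ') :
    dZvarBar (fun a b c => 1 / 2 * dZvar (Fs s) a b c) τ z τ' = (1/2 : ℂ) * s * (s - 1) * ((τ.im * τ'.im - z.im ^ 2 : ℝ) : ℂ) ^ (s - 1 - 1) * (z.im : ℂ) * (z.im : ℂ) - (1/4 : ℂ) * s * ((τ.im * τ'.im - z.im ^ 2 : ℝ) : ℂ) ^ (s - 1) := by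
  have hev : (fun w => (fun a b c => 1 / 2 * dZvar (Fs s) a b c) τ w τ') =ᶠ[nhds z]
      (fun u : ℂ => ((1 / 2 : ℂ) * (-(Complex.I / 2) * s)) * (((τ.im * τ'.im - u.im ^ 2 : ℝ) : ℂ) ^ (s - 1) * ((-(2 * u.im) : ℝ) : ℂ))) := by
    filter_upwards [evZ τ z τ' h] with w hw
    simp only [fd_Z s τ w τ' hw]
    push_cast
    ring
  have hg : HasDerivAt (fun t : ℝ => τ.im * τ'.im - t ^ 2) (-(2 * z.im)) z.im := by
    simpa using (hasDerivAt_pow 2 z.im).const_sub (τ.im * τ'.im)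
  have hL : HasDerivAt (fun t : ℝ => -(2 * t)) (-2:ℝ) z.im := by simpa [Pi.neg_def] using ((hasDerivAt_id z.im).const_mul (2:ℝ)).neg
  have hd := hda_gen (s - 1) ((1 / 2 : ℂ) * (-(Complex.I / 2) * s)) (fun t : ℝ => τ.im * τ'.im - t ^ 2) (fun t : ℝ => -(2 * t)) (-(2 * z.im)) (-2:ℝ) z.im hg hL h
  have key : dZvarBar (fun a b c => 1 / 2 * dZvar (Fs s) a b c) τ z τ' = _ := (wDbar_congr hev).trans (wDbar_apply _ _ _ hd)
  rw [key]
  push_cast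
  ring_nf
  simp only [Complex.I_sq]
  push_cast
  ring

lemma sd_ZP (s : ℂ) (τ z τ' : ℂ) (h : 0 < detY τ z τ') :
    dZvarBar (dTauP (Fs s)) τ z τ' = -(1/2 : ℂ) * s * (s - 1) * ((τ.im * τ'.im - z.im ^ 2 : ℝ) : ℂ) ^ (s - 1 - 1) * (z.im : ℂ) * (τ.im : ℂ) := by
  have hev : (fun w => (dTauP (Fs s)) τ w τ') =ᶠ[nhds z]
      (fun u : ℂ => (-(Complex.I / 2) * s) * (((τ.im * τ'.im - u.im ^ 2 : ℝ) : ℂ) ^ (s - 1) * ((τ.im : ℝ) : ℂ))) := by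
    filter_upwards [evZ τ z τ' h] with w hw
    simp only [fd_P s τ w τ' hw]
    push_cast
    ring
  have hg : HasDerivAt (fun t : ℝ => τ.im * τ'.im - t ^ 2) (-(2 * z.im)) z.im := by
    simpa using (hasDerivAt_pow 2 z.im).const_sub (τ.im * τ'.im)
  have hL : HasDerivAt (fun _ : ℝ => τ.im) (0:ℝ) z.im := hasDerivAt_const z.im _
  have hd := hda_gen (s - 1) (-(Complex.I / 2) * s) (fun t : ℝ => τ.im * τ'.im - t ^ 2) (fun _ : ℝ => τ.im) (-(2 * z.im)) (0:ℝ) z.im hg hL h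
  have key : dZvarBar (dTauP (Fs s)) τ z τ' = _ := (wDbar_congr hev).trans (wDbar_apply _ _ _ hd)
  rw [key]
  push_cast
  ring_nf
  simp only [Complex.I_sq]
  push_cast
  ring

lemma sd_PT (s : ℂ) (τ z τ' : ℂ) (h : 0 < detY τ z τ') :
    dTauPBar (dTau (Fs s)) τ z τ' = (1/4 : ℂ) * s * ((s - 1) * ((τ.im * τ'.im - z.im ^ 2 : ℝ) : ℂ) ^ (s - 1 - 1) * (τ.im : ℂ) * (τ'.im : ℂ) + ((τ.im * τ'.im - z.im ^ 2 : ℝ) : ℂ) ^ (s - 1)) := by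
  have hev : (fun w => (dTau (Fs s)) τ z w) =ᶠ[nhds τ']
      (fun u : ℂ => (-(Complex.I / 2) * s) * (((τ.im * u.im - z.im ^ 2 : ℝ) : ℂ) ^ (s - 1) * ((u.im : ℝ) : ℂ))) := by
    filter_upwards [evP τ z τ' h] with w hw
    simp only [fd_T s τ z w hw]
    push_cast
    ring
  have hg : HasDerivAt (fun t : ℝ => τ.im * t - z.im ^ 2) (τ.im) τ'.im := by
    simpa using ((hasDerivAt_id τ'.im).const_mul τ.im).sub_const (z.im ^ 2)
  have hL : HasDerivAt (fun t : ℝ => t) (1:ℝ) τ'.im := hasDerivAt_id τ'.im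
  have hd := hda_gen (s - 1) (-(Complex.I / 2) * s) (fun t : ℝ => τ.im * t - z.im ^ 2) (fun t : ℝ => t) (τ.im) (1:ℝ) τ'.im hg hL h
  have key : dTauPBar (dTau (Fs s)) τ z τ' = _ := (wDbar_congr hev).trans (wDbar_apply _ _ _ hd)
  rw [key]
  push_cast
  ring_nf
  simp only [Complex.I_sq]
  push_cast
  ring

lemma sd_PZ (s : ℂ) (τ z τ' : ℂ) (h : 0 < detY τ z τ') :
    dTauPBar (fun a b c => 1 / 2 * dZvar (Fs s) a b c) τ z τ' = -(1/4 : ℂ) * s * (s - 1) * ((τ.im * τ'.im - z.im ^ 2 : ℝ) : ℂ) ^ (s - 1 - 1) * (τ.im : ℂ) * (z.im : ℂ) := by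
  have hev : (fun w => (fun a b c => 1 / 2 * dZvar (Fs s) a b c) τ z w) =ᶠ[nhds τ']
      (fun u : ℂ => ((1 / 2 : ℂ) * (-(Complex.I / 2) * s)) * (((τ.im * u.im - z.im ^ 2 : ℝ) : ℂ) ^ (s - 1) * ((-(2 * z.im) : ℝ) : ℂ))) := by
    filter_upwards [evP τ z τ' h] with w hw
    simp only [fd_Z s τ z w hw]
    push_cast
    ring
  have hg : HasDerivAt (fun t : ℝ => τ.im * t - z.im ^ 2) (τ.im) τ'.im := by
    simpa using ((hasDerivAt_id τ'.im).const_mul τ.im).sub_const (z.im ^ 2)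
  have hL : HasDerivAt (fun _ : ℝ => -(2 * z.im)) (0:ℝ) τ'.im := hasDerivAt_const τ'.im _
  have hd := hda_gen (s - 1) ((1 / 2 : ℂ) * (-(Complex.I / 2) * s)) (fun t : ℝ => τ.im * t - z.im ^ 2) (fun _ : ℝ => -(2 * z.im)) (τ.im) (0:ℝ) τ'.im hg hL h
  have key : dTauPBar (fun a b c => 1 / 2 * dZvar (Fs s) a b c) τ z τ' = _ := (wDbar_congr hev).trans (wDbar_apply _ _ _ hd)
  rw [key]
  push_cast
  ring_nf
  simp only [Complex.I_sq]
  push_cast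
  ring

lemma sd_PP (s : ℂ) (τ z τ' : ℂ) (h : 0 < detY τ z τ') :
    dTauPBar (dTauP (Fs s)) τ z τ' = (1/4 : ℂ) * s * (s - 1) * ((τ.im * τ'.im - z.im ^ 2 : ℝ) : ℂ) ^ (s - 1 - 1) * (τ.im : ℂ) * (τ.im : ℂ) := by
  have hev : (fun w => (dTauP (Fs s)) τ z w) =ᶠ[nhds τ']
      (fun u : ℂ => (-(Complex.I / 2) * s) * (((τ.im * u.im - z.im ^ 2 : ℝ) : ℂ) ^ (s - 1) * ((τ.im : ℝ) : ℂ))) := by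
    filter_upwards [evP τ z τ' h] with w hw
    simp only [fd_P s τ z w hw]
    push_cast
    ring
  have hg : HasDerivAt (fun t : ℝ => τ.im * t - z.im ^ 2) (τ.im) τ'.im := by
    simpa using ((hasDerivAt_id τ'.im).const_mul τ.im).sub_const (z.im ^ 2)
  have hL : HasDerivAt (fun _ : ℝ => τ.im) (0:ℝ) τ'.im := hasDerivAt_const τ'.im _
  have hd := hda_gen (s - 1) (-(Complex.I / 2) * s) (fun t : ℝ => τ.im * t - z.im ^ 2) (fun _ : ℝ => τ.im) (τ.im) (0:ℝ) τ'.im hg hL h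
  have key : dTauPBar (dTauP (Fs s)) τ z τ' = _ := (wDbar_congr hev).trans (wDbar_apply _ _ _ hd)
  rw [key]
  push_cast
  ring_nf
  simp only [Complex.I_sq]
  push_cast
  ring


lemma key1 (k : ℤ) (s : ℂ) (i j : Fin 2) (τ z τ' : ℂ) (hτ : 0 < τ.im) (h : 0 < detY τ z τ') :
    OmegaEntry (1 / 2) ((k : ℂ) - 1 / 2)
        (fun a b c => ((detY a b c : ℝ) : ℂ) ^ s) i j τ z τ'
      = -s * (s - (3 / 2 - (k : ℂ))) * ((detY τ z τ' : ℝ) : ℂ) ^ s *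
          (if i = j then 1 else 0) := by
  have hFs : (fun a b c => ((detY a b c : ℝ) : ℂ) ^ s) = Fs s := rfl
  rw [hFs]
  have h' : (0:ℝ) < τ.im * τ'.im - z.im ^ 2 := h
  have hne : ((τ.im * τ'.im - z.im ^ 2 : ℝ) : ℂ) ≠ 0 := by
    exact_mod_cast ne_of_gt h'
  have cpow_succ : ∀ a : ℂ, ((τ.im * τ'.im - z.im ^ 2 : ℝ) : ℂ) ^ (a + 1)
      = ((τ.im * τ'.im - z.im ^ 2 : ℝ) : ℂ) ^ a * ((τ.im * τ'.im - z.im ^ 2 : ℝ) : ℂ) := by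
    intro a
    rw [Complex.cpow_add _ _ hne, Complex.cpow_one]
  have e1 : ((τ.im * τ'.im - z.im ^ 2 : ℝ) : ℂ) ^ (s - 1)
      = ((τ.im * τ'.im - z.im ^ 2 : ℝ) : ℂ) ^ (s - 1 - 1) * ((τ.im * τ'.im - z.im ^ 2 : ℝ) : ℂ) := by
    have := cpow_succ (s - 1 - 1)
    rwa [show s - 1 - 1 + 1 = s - 1 by ring] at this
  have e0 : ((τ.im * τ'.im - z.im ^ 2 : ℝ) : ℂ) ^ s
      = ((τ.im * τ'.im - z.im ^ 2 : ℝ) : ℂ) ^ (s - 1) * ((τ.im * τ'.im - z.im ^ 2 : ℝ) : ℂ) := by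
    have := cpow_succ (s - 1)
    rwa [show s - 1 + 1 = s by ring] at this
  fin_cases i <;> fin_cases j <;>
    simp only [OmegaEntry, DZop, DZbarop, Ymat, Fin.sum_univ_two, Matrix.cons_val', Matrix.cons_val_zero,
      Matrix.cons_val_one, Matrix.head_cons, Matrix.head_fin_const, Matrix.empty_val',
      Matrix.cons_val_fin_one, Fin.isValue, if_true, reduceIte, Fin.zero_eta, Fin.mk_one, one_ne_zero,
      if_false, Matrix.of_apply]
  all_goals
    simp only [fd_T s τ z τ' h, fd_Z s τ z τ' h, fd_P s τ z τ' h, fdb_T s τ z τ' h,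
      fdb_Z s τ z τ' h, fdb_P s τ z τ' h, sd_TT s τ z τ' h, sd_TZ s τ z τ' h, sd_TP s τ z τ' h,
      sd_ZT s τ z τ' h, sd_ZZ s τ z τ' h, sd_ZP s τ z τ' h, sd_PT s τ z τ' h, sd_PZ s τ z τ' h,
      sd_PP s τ z τ' h, detY, e0, e1]
    push_cast
    ring_nf
    try simp only [Complex.I_sq]
    try push_cast
    try ring

/-- `Ω_{1/2, k-1/2}((det Y)^s) = -s(s - (3/2 - k))(det Y)^s I₂` on `ℍ₂`;
in particular `(det Y)^s ∈ ker Ω_{1/2, k-1/2}` iff `s = 0` or `s = 3/2 - k`. -/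
theorem stmt1 (k : ℤ) (s : ℂ) :
    (∀ i j : Fin 2, ∀ τ z τ' : ℂ, 0 < τ.im → 0 < detY τ z τ' →
        OmegaEntry (1 / 2) ((k : ℂ) - 1 / 2)
            (fun a b c => ((detY a b c : ℝ) : ℂ) ^ s) i j τ z τ'
          = -s * (s - (3 / 2 - (k : ℂ))) * ((detY τ z τ' : ℝ) : ℂ) ^ s *
              (if i = j then 1 else 0)) ∧
    ((∀ i j : Fin 2, ∀ τ z τ' : ℂ, 0 < τ.im → 0 < detY τ z τ' →
        OmegaEntry (1 / 2) ((k : ℂ) - 1 / 2)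
            (fun a b c => ((detY a b c : ℝ) : ℂ) ^ s) i j τ z τ' = 0)
      ↔ (s = 0 ∨ s = 3 / 2 - (k : ℂ))) := by
  refine ⟨fun i j τ z τ' hτ h => key1 k s i j τ z τ' hτ h, ⟨?_, ?_⟩⟩
  · intro hker
    have hd : (0:ℝ) < detY Complex.I 0 Complex.I := by simp [detY]
    have h2 := hker 0 0 Complex.I 0 Complex.I (by simp) hd
    have h3 := key1 k s 0 0 Complex.I 0 Complex.I (by simp) hd
    rw [h2] at h3
    have hdet1 : (detY Complex.I 0 Complex.I : ℝ) = 1 := by simp [detY]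
    rw [hdet1] at h3
    simp only [Complex.ofReal_one, Complex.one_cpow, mul_one, if_true, reduceIte] at h3
    have h4 : -s * (s - (3 / 2 - (k : ℂ))) = 0 := h3.symm
    rcases mul_eq_zero.1 h4 with h5 | h5
    · left; simpa using h5
    · right; have := sub_eq_zero.1 h5; exact this
  · intro hs i j τ z τ' h1 h2
    rw [key1 k s i j τ z τ' h1 h2]
    rcases hs with h | h
    · simp [h]
    · rw [h]; ring
end

section
/- Let $k < 0$ be an integer. The ratio of the coefficient of $v^n$ in the power series expansion of $(\tfrac{v}{4})^{\frac32 - k}\,{}_2F_3\big(1, 2-k; \tfrac52 - k, 2 - \tfrac{k}{2}, \tfrac{5-k}{2}; \tfrac{v}{4}\big)$ to the coefficient of $v^n$ in the power series expansion of $(\tfrac{v}{4})^{-\frac{k}{2}}\,{}_1F_2\big(\tfrac{1-k}{2}; \tfrac12, 1 - \tfrac{k}{2}; \tfrac{v}{4}\big)$ tends to zero as $n \to \infty$. (Here the series in the numerator contributes only to half-integer-shifted powers; interpret both as series in $v^{1/2}$, comparing coefficients of the same power $v^n$ along the arithmetic progression where both are nonzero, or equivalently compare the coefficient sequences after reindexing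 so that both series are indexed by $n$.) -/
open Filter

/-- The `n`-th Taylor coefficient of the generalized hypergeometric series
`ₚF_q(a; b; v) = Σₙ (a₁)ₙ⋯(aₚ)ₙ / ((b₁)ₙ⋯(b_q)ₙ n!) vⁿ`. -/
noncomputable def hypCoeffR {p q : ℕ} (a : Fin p → ℝ) (b : Fin q → ℝ) (n : ℕ) : ℝ :=
  (∏ i, (ascPochhammer ℝ n).eval (a i)) /
    ((∏ j, (ascPochhammer ℝ n).eval (b j)) * (n.factorial : ℝ))

namespace Stmt10Aux

noncomputable def PA (c : ℝ) (n : ℕ) : ℝ :=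
  (ascPochhammer ℝ n).eval 1 * (ascPochhammer ℝ n).eval (2 - c)

noncomputable def QA (c : ℝ) (n : ℕ) : ℝ :=
  (ascPochhammer ℝ n).eval (5 / 2 - c) * (ascPochhammer ℝ n).eval (2 - c / 2) *
    (ascPochhammer ℝ n).eval ((5 - c) / 2) * (n.factorial : ℝ)

noncomputable def PB (c : ℝ) (n : ℕ) : ℝ :=
  (ascPochhammer ℝ n).eval ((1 - c) / 2)

noncomputable def QB (c : ℝ) (n : ℕ) : ℝ :=
  (ascPochhammer ℝ n).eval (1 / 2) * (ascPochhammer ℝ n).eval (1 - c / 2) * (n.factorial : ℝ)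

variable {c : ℝ} (hc : c ≤ -1)

include hc

lemma PA_pos (n : ℕ) : 0 < PA c n := by
  exact mul_pos (ascPochhammer_pos n _ (by norm_num)) (ascPochhammer_pos n _ (by linarith))

lemma QA_pos (n : ℕ) : 0 < QA c n := by
  refine mul_pos (mul_pos (mul_pos ?_ ?_) ?_) (by positivity) <;>
    exact ascPochhammer_pos n _ (by linarith)

lemma PB_pos (n : ℕ) : 0 < PB c n := ascPochhammer_pos n _ (by linarith)

lemma QB_pos (n : ℕ) : 0 < QB c n := by
  refine mul_pos (mul_pos ?_ ?_) (by positivity) <;>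
    exact ascPochhammer_pos n _ (by linarith)

lemma key (n : ℕ) :
    PA c n * QB c n * (((n : ℝ) + 1) * ((n : ℝ) + 2)) ≤ 2 * (PB c n * QA c n) := by
  induction n with
  | zero => norm_num [PA, QA, PB, QB]
  | succ n ih =>
      have hn : (0:ℝ) ≤ n := n.cast_nonneg
      have hPA : PA c (n + 1) = PA c n * ((1 + n) * (2 - c + n)) := by
        simp only [PA, ascPochhammer_succ_eval]; ring
      have hPB : PB c (n + 1) = PB c n * ((1 - c) / 2 + n) := by
        simp only [PB, ascPochhammer_succ_eval]
      have hQA : QA c (n + 1) =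
          QA c n * ((5 / 2 - c + n) * (2 - c / 2 + n) * ((5 - c) / 2 + n) * (n + 1)) := by
        simp only [QA, ascPochhammer_succ_eval, Nat.factorial_succ, Nat.cast_mul,
          Nat.cast_add, Nat.cast_one]
        ring
      have hQB : QB c (n + 1) = QB c n * ((1 / 2 + n) * (1 - c / 2 + n) * (n + 1)) := by
        simp only [QB, ascPochhammer_succ_eval, Nat.factorial_succ, Nat.cast_mul,
          Nat.cast_add, Nat.cast_one]
        ring
      have hfac : (2 - c + (n:ℝ)) * ((1 / 2 + n) * ((1 - c / 2 + n) * ((n:ℝ) + 3))) ≤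
          (5 / 2 - c + n) * (((1 - c) / 2 + n) * ((2 - c / 2 + n) * ((5 - c) / 2 + n))) := by
        have e1 : (2 - c + (n:ℝ)) ≤ 5 / 2 - c + n := by linarith
        have e2 : (1 / 2 + (n:ℝ)) ≤ (1 - c) / 2 + n := by linarith
        have e3 : (1 - c / 2 + (n:ℝ)) ≤ 2 - c / 2 + n := by linarith
        have e4 : ((n:ℝ) + 3) ≤ (5 - c) / 2 + n := by linarith
        have p2 : (0:ℝ) ≤ 1 - c / 2 + n := by linarith
        have p3 : (0:ℝ) ≤ (n:ℝ) + 3 := by linarith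
        have p23 : (0:ℝ) ≤ (1 - c / 2 + (n:ℝ)) * ((n:ℝ) + 3) := mul_nonneg p2 p3
        have p123 : (0:ℝ) ≤ (1 / 2 + (n:ℝ)) * ((1 - c / 2 + (n:ℝ)) * ((n:ℝ) + 3)) :=
          mul_nonneg (by linarith) p23
        gcongr <;> first | assumption | linarith
      have hPBQA : 0 < PB c n * QA c n := mul_pos (PB_pos hc n) (QA_pos hc n)
      have hMpos : (0:ℝ) ≤ (1 + (n:ℝ)) * (2 - c + n) * ((1 / 2 + n) * (1 - c / 2 + n)) *
          ((n:ℝ) + 3) := by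
        have a1 : (0:ℝ) < 1 + n := by linarith
        have a2 : (0:ℝ) < 2 - c + n := by linarith
        have a3 : (0:ℝ) < 1 / 2 + n := by linarith
        have a4 : (0:ℝ) < 1 - c / 2 + n := by linarith
        have a5 : (0:ℝ) < (n:ℝ) + 3 := by linarith
        exact le_of_lt (mul_pos (mul_pos (mul_pos a1 a2) (mul_pos a3 a4)) a5)
      have hC : (0:ℝ) ≤ 2 * (PB c n * QA c n) * ((n:ℝ) + 1) := by positivity
      have hcast : ((n + 1 : ℕ) : ℝ) = (n : ℝ) + 1 := by push_cast; ring
      rw [hcast]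
      calc PA c (n + 1) * QB c (n + 1) * (((n:ℝ) + 1 + 1) * ((n:ℝ) + 1 + 2))
          = (PA c n * QB c n * (((n:ℝ) + 1) * ((n:ℝ) + 2))) *
              ((1 + (n:ℝ)) * (2 - c + n) * ((1 / 2 + n) * (1 - c / 2 + n)) * ((n:ℝ) + 3)) := by
            rw [hPA, hQB]; ring
        _ ≤ (2 * (PB c n * QA c n)) *
              ((1 + (n:ℝ)) * (2 - c + n) * ((1 / 2 + n) * (1 - c / 2 + n)) * ((n:ℝ) + 3)) :=
            mul_le_mul_of_nonneg_right ih hMpos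
        _ = (2 * (PB c n * QA c n) * ((n:ℝ) + 1)) *
              ((2 - c + (n:ℝ)) * ((1 / 2 + n) * ((1 - c / 2 + n) * ((n:ℝ) + 3)))) := by ring
        _ ≤ (2 * (PB c n * QA c n) * ((n:ℝ) + 1)) *
              ((5 / 2 - c + (n:ℝ)) * (((1 - c) / 2 + n) * ((2 - c / 2 + n) * ((5 - c) / 2 + n)))) :=
            mul_le_mul_of_nonneg_left hfac hC
        _ = 2 * (PB c (n + 1) * QA c (n + 1)) := by rw [hPB, hQA]; ring

end Stmt10Aux

open Stmt10Aux in
theorem stmt10 (k : ℤ) (hk : k < 0) :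
    Tendsto (fun n : ℕ =>
        ((4 : ℝ) ^ (-(3 / 2 - (k : ℝ))) *
            hypCoeffR ![1, 2 - (k : ℝ)]
              ![5 / 2 - (k : ℝ), 2 - (k : ℝ) / 2, (5 - (k : ℝ)) / 2] n * (4 : ℝ)⁻¹ ^ n) /
          ((4 : ℝ) ^ ((k : ℝ) / 2) *
            hypCoeffR ![(1 - (k : ℝ)) / 2] ![1 / 2, 1 - (k : ℝ) / 2] n * (4 : ℝ)⁻¹ ^ n))
      atTop (nhds 0) := by
  set c : ℝ := (k : ℝ) with hcdef
  have hc : c ≤ -1 := by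
    rw [hcdef]
    exact_mod_cast (by omega : k ≤ -1)
  set K : ℝ := (4 : ℝ) ^ (-(3 / 2 - c)) / (4 : ℝ) ^ (c / 2) with hK
  have hKpos : 0 < K := by
    apply div_pos <;> exact Real.rpow_pos_of_pos (by norm_num) _
  have hAeq : ∀ n, hypCoeffR ![1, 2 - c] ![5 / 2 - c, 2 - c / 2, (5 - c) / 2] n
      = PA c n / QA c n := by
    intro n
    simp [hypCoeffR, Fin.prod_univ_two, Fin.prod_univ_three, PA, QA, mul_assoc]
  have hBeq : ∀ n, hypCoeffR ![(1 - c) / 2] ![1 / 2, 1 - c / 2] n = PB c n / QB c n := by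
    intro n
    simp [hypCoeffR, Fin.prod_univ_one, Fin.prod_univ_two, PB, QB, mul_assoc]
  have hfeq : ∀ n : ℕ,
      ((4 : ℝ) ^ (-(3 / 2 - c)) *
          hypCoeffR ![1, 2 - c] ![5 / 2 - c, 2 - c / 2, (5 - c) / 2] n * (4 : ℝ)⁻¹ ^ n) /
        ((4 : ℝ) ^ (c / 2) *
          hypCoeffR ![(1 - c) / 2] ![1 / 2, 1 - c / 2] n * (4 : ℝ)⁻¹ ^ n)
      = K * ((PA c n * QB c n) / (QA c n * PB c n)) := by
    intro n
    rw [hAeq, hBeq, hK]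
    have h1 := PA_pos hc n
    have h2 := QA_pos hc n
    have h3 := PB_pos hc n
    have h4 := QB_pos hc n
    have h5 : ((4:ℝ)⁻¹ : ℝ) ^ n ≠ 0 := by positivity
    have h6 : (4 : ℝ) ^ (c / 2) ≠ 0 := by positivity
    field_simp
  have hbound : ∀ n : ℕ,
      K * ((PA c n * QB c n) / (QA c n * PB c n)) ≤ K * (2 / (((n:ℝ) + 1) * ((n:ℝ) + 2))) := by
    intro n
    have h1 := PA_pos hc n
    have h2 := QA_pos hc n
    have h3 := PB_pos hc n
    have h4 := QB_pos hc n
    apply mul_le_mul_of_nonneg_left _ hKpos.le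
    rw [div_le_div_iff₀ (by positivity) (by positivity)]
    nlinarith [key hc n]
  have hnonneg : ∀ n : ℕ, (0:ℝ) ≤ K * ((PA c n * QB c n) / (QA c n * PB c n)) := by
    intro n
    have h1 := PA_pos hc n
    have h2 := QA_pos hc n
    have h3 := PB_pos hc n
    have h4 := QB_pos hc n
    positivity
  have hupper : Tendsto (fun n : ℕ => K * (2 / (((n:ℝ) + 1) * ((n:ℝ) + 2)))) atTop (nhds 0) := by
    have h0 : Tendsto (fun n : ℕ => (((n:ℝ) + 1) * ((n:ℝ) + 2))) atTop atTop := by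
      apply Tendsto.atTop_mul_atTop₀ <;>
        exact tendsto_atTop_add_const_right _ _ tendsto_natCast_atTop_atTop
    have h1 : Tendsto (fun n : ℕ => (((n:ℝ) + 1) * ((n:ℝ) + 2))⁻¹) atTop (nhds 0) :=
      h0.inv_tendsto_atTop
    have h2 := h1.const_mul (K * 2)
    simpa [div_eq_mul_inv, mul_inv, mul_comm, mul_left_comm, mul_assoc] using h2
  have main : Tendsto (fun n : ℕ => K * ((PA c n * QB c n) / (QA c n * PB c n)))
      atTop (nhds 0) :=
    tendsto_of_tendsto_of_tendsto_of_le_of_le tendsto_const_nhds hupper hnonneg hbound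
  exact Tendsto.congr (fun n => (hfeq n).symm) main
end

section
/- Suppose a sequence of Laurent polynomials $l_n \in \mathbb{C}[u, u^{-1}]$ satisfies a recursion $l_{n+1} = \sum_{d=0}^{D} p_{n,d}\, l_n^{(d)}$, where $l_n^{(d)}$ denotes the $d$-th derivative, $p_{n,d} \in \mathbb{C}[u, u^{-1}]$ with $\deg_u p_{n,0} = 0$ and $\deg_u p_{n,d} < d$ for $d \ne 0$, the valuations of all $p_{n,d}$ are uniformly bounded below, and $(n|V|)^d\, p_{n,d}$ has uniformly bounded coefficients as $n \to \infty$ (where $V$ is a lower bound on $\mathrm{val}_u(p_{n,d}) - d$). Then: (i) $\deg_u l_n \le \deg_u l_0$ for all $n$; (ii) $\mathrm{val}_u l_n \ge \mathrm{val}_u l_0 + nV$; (iii) there exist constants $B, b \ge 1$ such that every coefficient of $l_n$ has absolute value at most $B\, b^n$; consequently, with $\kappa := 2b$, the formal Laurent series $\sum_{n=0}^\infty l_n(u)\,(u/\kappa)^n$ is well-defined (each coefficient is a convergent sum) and has all coefficients bounded in absolute value by $2B$. -/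
/-- Derivative of a Laurent polynomial given by its coefficient function:
`(D p)_j = (j+1) p_{j+1}`. -/
noncomputable def lderiv (p : ℤ → ℂ) : ℤ → ℂ := fun j => ((j + 1 : ℤ) : ℂ) * p (j + 1)

/-- Product of two Laurent polynomials given by their coefficient functions. -/
noncomputable def lmul (p q : ℤ → ℂ) : ℤ → ℂ := fun j => ∑' i : ℤ, p i * q (j - i)

/-- The `d`-fold derivative of a Laurent polynomial, explicitly. -/
lemma lderiv_iter (d : ℕ) (q : ℤ → ℂ) (k : ℤ) :
    lderiv^[d] q k = (∏ m ∈ Finset.range d, ((k + m + 1 : ℤ) : ℂ)) * q (k + d) := by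
  induction d generalizing q k with
  | zero => simp
  | succ d ih =>
    rw [Function.iterate_succ_apply, ih, lderiv, Finset.prod_range_succ]
    push_cast
    rw [← add_assoc]
    ring

/-- suppose Laurent polynomials `lₙ` satisfy the recursion
`l_{n+1} = Σ_{d=0}^D p_{n,d} lₙ⁽ᵈ⁾` where `deg p_{n,0} = 0`, `deg p_{n,d} < d` for
`d ≠ 0`, `V` is a lower bound for `val(p_{n,d}) - d`, and `(n|V|)^d p_{n,d}` has
uniformly bounded coefficients.  Then (i) `deg lₙ ≤ deg l₀`;
(ii) `val lₙ ≥ val l₀ + nV`; (iii) there are `B, b ≥ 1` with `|(lₙ)_j| ≤ B bⁿ`, so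
that with `κ = 2b` the formal Laurent series `Σₙ lₙ(u) (u/κ)ⁿ` is well-defined
(each coefficient an absolutely convergent sum) with all coefficients bounded by `2B`. -/
theorem stmt14 (l : ℕ → ℤ → ℂ) (p : ℕ → ℕ → ℤ → ℂ) (D : ℕ) (V : ℤ) (Dl Vl : ℤ)
    (hdeg0 : ∀ j : ℤ, Dl < j → l 0 j = 0)
    (hval0 : ∀ j : ℤ, j < Vl → l 0 j = 0)
    (hrec : ∀ n : ℕ, ∀ j : ℤ,
        l (n + 1) j = ∑ d ∈ Finset.range (D + 1), lmul (p n d) (lderiv^[d] (l n)) j)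
    (hp0deg : ∀ n : ℕ, ∀ j : ℤ, 0 < j → p n 0 j = 0)
    (hp0lead : ∀ n : ℕ, p n 0 0 ≠ 0)
    (hpdeg : ∀ n : ℕ, ∀ d : ℕ, d ≠ 0 → ∀ j : ℤ, (d : ℤ) ≤ j → p n d j = 0)
    (hpval : ∀ n : ℕ, ∀ d : ℕ, ∀ j : ℤ, j < V + d → p n d j = 0)
    (hbound : ∃ C : ℝ, ∀ n : ℕ, ∀ d : ℕ, ∀ j : ℤ,
        (((n : ℤ) * |V| : ℤ) : ℝ) ^ d * ‖p n d j‖ ≤ C) :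
    (∀ n : ℕ, ∀ j : ℤ, Dl < j → l n j = 0) ∧
    (∀ n : ℕ, ∀ j : ℤ, j < Vl + n * V → l n j = 0) ∧
    (∃ B b : ℝ, 1 ≤ B ∧ 1 ≤ b ∧
      (∀ n : ℕ, ∀ j : ℤ, ‖l n j‖ ≤ B * b ^ n) ∧
      ∀ j : ℤ,
        (Summable fun n : ℕ => ‖l n (j - n)‖ / (2 * b) ^ n) ∧
          (∑' n : ℕ, ‖l n (j - n)‖ / (2 * b) ^ n) ≤ 2 * B) := by
  have hdeg : ∀ n : ℕ, ∀ j : ℤ, Dl < j → l n j = 0 := by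
    intro n
    induction n with
    | zero => exact hdeg0
    | succ n ih =>
      intro j hj
      rw [hrec]
      refine Finset.sum_eq_zero fun d _ => ?_
      have hz : ∀ i : ℤ, p n d i * lderiv^[d] (l n) (j - i) = 0 := by
        intro i
        by_cases hp : p n d i = 0
        · rw [hp, zero_mul]
        · have hi : i ≤ (d : ℤ) := by
            rcases Nat.eq_zero_or_pos d with hd | hd
            · subst hd
              by_contra h
              exact hp (hp0deg n i (by push_neg at h; simpa using h))
            · by_contra h
              exact hp (hpdeg n d hd.ne' i (by omega))
          rw [lderiv_iter]
          have : l n (j - i + d) = 0 := ih _ (by omega)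
          rw [this, mul_zero, mul_zero]
      simp only [lmul, hz, tsum_zero]
  have hval : ∀ n : ℕ, ∀ j : ℤ, j < Vl + n * V → l n j = 0 := by
    intro n
    induction n with
    | zero => intro j hj; exact hval0 j (by push_cast at hj; omega)
    | succ n ih =>
      intro j hj
      rw [hrec]
      refine Finset.sum_eq_zero fun d _ => ?_
      have hz : ∀ i : ℤ, p n d i * lderiv^[d] (l n) (j - i) = 0 := by
        intro i
        by_cases hp : p n d i = 0
        · rw [hp, zero_mul]
        · have hi : V + (d : ℤ) ≤ i := by
            by_contra h
            exact hp (hpval n d i (by omega))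
          rw [lderiv_iter]
          have : l n (j - i + d) = 0 := by
            refine ih _ ?_
            push_cast at hj ⊢
            linarith
          rw [this, mul_zero, mul_zero]
      simp only [lmul, hz, tsum_zero]
  refine ⟨hdeg, hval, ?_⟩
  obtain ⟨C, hC⟩ := hbound
  have hV : V ≤ 0 := by
    by_contra h
    push_neg at h
    exact hp0lead 0 (hpval 0 0 0 (by simpa using h))
  have hCnn : 0 ≤ C := (norm_nonneg (p 0 0 0)).trans (by simpa using hC 0 0 0)
  set S : Finset ℤ := Finset.Icc V (D : ℤ) with hS
  -- lmul as finite sum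
  have hlm : ∀ n d, d ≤ D → ∀ (q : ℤ → ℂ) (j : ℤ),
      lmul (p n d) q j = ∑ i ∈ S, p n d i * q (j - i) := by
    intro n d hdD q j
    refine tsum_eq_sum fun i hi => ?_
    rw [hS, Finset.mem_Icc] at hi
    push_neg at hi
    rcases lt_or_ge i V with h1 | h2
    · rw [hpval n d i (by omega), zero_mul]
    · have hDi : (D : ℤ) < i := hi h2
      rcases Nat.eq_zero_or_pos d with hd | hd
      · subst hd; rw [hp0deg n i (by omega), zero_mul]
      · rw [hpdeg n d hd.ne' i (by omega), zero_mul]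
  set A : ℝ := |(Dl : ℝ)| + |(Vl : ℝ)| + D + 1 with hAdef
  have hA1 : 1 ≤ A := by
    have h1 := abs_nonneg (Dl : ℝ)
    have h2 := abs_nonneg (Vl : ℝ)
    have h3 : (0:ℝ) ≤ D := Nat.cast_nonneg D
    rw [hAdef]; linarith
  set C1 : ℝ := max C 1 with hC1def
  set C0 : ℝ := ∑ d ∈ Finset.range (D + 1), ∑ i ∈ S, ‖p 0 d i‖ with hC0def
  have hC0nn : 0 ≤ C0 := by positivity
  set E : ℝ := (2 * A) ^ D * (C1 + C0 + 1) with hEdef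
  have h2A : 1 ≤ (2 * A) ^ D := one_le_pow₀ (by linarith)
  have hC11 : 1 ≤ C1 := le_max_right C 1
  have hE1 : 1 ≤ E := by
    rw [hEdef]
    calc (1:ℝ) ≤ C1 + C0 + 1 := by linarith
    _ ≤ (2 * A) ^ D * (C1 + C0 + 1) := le_mul_of_one_le_left (by linarith) h2A
  have hEC1 : C1 + C0 + 1 ≤ E := by
    rw [hEdef]
    exact le_mul_of_one_le_left (by linarith) h2A
  have hnV : ∀ n : ℕ, -((n:ℝ) * (V:ℝ)) ≤ (n:ℝ) * |(V:ℝ)| := by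
    intro n
    have h1 : -(V:ℝ) ≤ |(V:ℝ)| := neg_le_abs _
    have h2 : (0:ℝ) ≤ (n:ℝ) := Nat.cast_nonneg n
    nlinarith
  have hnVnn : ∀ n : ℕ, (0:ℝ) ≤ (n:ℝ) * |(V:ℝ)| := fun n => by positivity
  -- bound on iterated derivatives
  have hderivb : ∀ (n : ℕ) (L : ℝ), 0 ≤ L → (∀ j, ‖l n j‖ ≤ L) →
      ∀ (d : ℕ), d ≤ D → ∀ k : ℤ,
      ‖lderiv^[d] (l n) k‖ ≤ (A + n * |(V : ℝ)|) ^ d * L := by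
    intro n L hL hLb d hdD k
    have hP0 : (0:ℝ) ≤ A + n * |(V:ℝ)| := by have := hnVnn n; linarith
    rw [lderiv_iter, norm_mul, norm_prod]
    by_cases h0 : l n (k + d) = 0
    · rw [h0, norm_zero, mul_zero]
      positivity
    · have hk1 : Vl + (n:ℤ) * V ≤ k + d := by
        by_contra h
        exact h0 (hval n _ (by omega))
      have hk2 : k + (d:ℤ) ≤ Dl := by
        by_contra h
        exact h0 (hdeg n _ (by omega))
      have hr1 : (k:ℝ) + d ≤ (Dl:ℝ) := by exact_mod_cast hk2
      have hr2 : (Vl:ℝ) + (n:ℝ) * (V:ℝ) ≤ (k:ℝ) + d := by exact_mod_cast hk1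
      have hd' : (d:ℝ) ≤ (D:ℝ) := by exact_mod_cast hdD
      have hprod : ∏ m ∈ Finset.range d, ‖((k + m + 1 : ℤ) : ℂ)‖ ≤
          (A + n * |(V:ℝ)|) ^ d := by
        calc ∏ m ∈ Finset.range d, ‖((k + m + 1 : ℤ) : ℂ)‖
            ≤ ∏ _m ∈ Finset.range d, (A + n * |(V:ℝ)|) := by
              refine Finset.prod_le_prod (fun _ _ => norm_nonneg _) (fun m hm => ?_)
              rw [Complex.norm_intCast]
              have hm' : (m:ℝ) + 1 ≤ (d:ℝ) := by
                exact_mod_cast Nat.succ_le_of_lt (Finset.mem_range.mp hm)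
              rw [abs_le]
              have hD1 := le_abs_self (Dl:ℝ)
              have hD2 := neg_abs_le (Vl:ℝ)
              have hD3 := hnV n
              have hm0 : (0:ℝ) ≤ (m:ℝ) := Nat.cast_nonneg m
              have hD0 : (0:ℝ) ≤ (D:ℝ) := Nat.cast_nonneg D
              have hD4 := abs_nonneg (Dl:ℝ)
              have hD5 := abs_nonneg (Vl:ℝ)
              have hD6 := hnVnn n
              constructor <;> · push_cast; rw [hAdef]; linarith
          _ = (A + n * |(V:ℝ)|) ^ d := by rw [Finset.prod_const, Finset.card_range]
      exact mul_le_mul hprod (hLb _) (norm_nonneg _) (by positivity)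
  -- per-term bound
  have hterm : ∀ (n d : ℕ), d ≤ D → ∀ i : ℤ, i ∈ S →
      ‖p n d i‖ * (A + n * |(V:ℝ)|) ^ d ≤ E := by
    intro n d hdD i hiS
    rcases Nat.eq_zero_or_pos d with hd0 | hd1
    · subst hd0
      have h1 : ‖p n 0 i‖ ≤ C := by simpa using hC n 0 i
      rw [pow_zero, mul_one]
      calc ‖p n 0 i‖ ≤ C := h1
        _ ≤ C1 := le_max_left C 1
        _ ≤ E := by linarith
    · rcases Nat.eq_zero_or_pos n with hn0 | hn1
      · subst hn0
        have hpC0 : ‖p 0 d i‖ ≤ C0 := by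
          rw [hC0def]
          calc ‖p 0 d i‖
              ≤ ∑ i' ∈ S, ‖p 0 d i'‖ :=
                Finset.single_le_sum (fun _ _ => norm_nonneg _) hiS
            _ ≤ ∑ d' ∈ Finset.range (D+1), ∑ i' ∈ S, ‖p 0 d' i'‖ :=
                Finset.single_le_sum (f := fun d' => ∑ i' ∈ S, ‖p 0 d' i'‖)
                  (fun _ _ => Finset.sum_nonneg fun _ _ => norm_nonneg _)
                  (Finset.mem_range.mpr (by omega))
        have hpow : (A + (0:ℕ) * |(V:ℝ)|) ^ d ≤ (2 * A) ^ D := by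
          simp only [Nat.cast_zero, zero_mul, add_zero]
          calc A ^ d ≤ (2 * A) ^ d := pow_le_pow_left₀ (by linarith) (by linarith) d
            _ ≤ (2 * A) ^ D := pow_le_pow_right₀ (by linarith) hdD
        calc ‖p 0 d i‖ * (A + (0:ℕ) * |(V:ℝ)|) ^ d
            ≤ C0 * (2 * A) ^ D := mul_le_mul hpC0 hpow (by positivity) hC0nn
          _ ≤ E := by
              rw [hEdef, mul_comm C0 ((2*A)^D)]
              exact mul_le_mul_of_nonneg_left (by linarith) (by positivity)
      · by_cases hV0 : V = 0
        · have hz : p n d i = 0 := by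
            rcases lt_or_ge i (d:ℤ) with h | h
            · exact hpval n d i (by omega)
            · exact hpdeg n d (by omega) i h
          rw [hz, norm_zero, zero_mul]
          linarith
        · have hV1 : (1:ℝ) ≤ (n:ℝ) * |(V:ℝ)| := by
            have h1 : (1:ℤ) ≤ |V| := by rw [abs_of_nonpos hV]; omega
            have h2 : (1:ℝ) ≤ |(V:ℝ)| := by exact_mod_cast (by push_cast [Int.cast_abs]; exact_mod_cast h1 : (1:ℝ) ≤ |(V:ℝ)|)
            have h3 : (1:ℝ) ≤ (n:ℝ) := by exact_mod_cast hn1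
            nlinarith
          have hkey : (A + (n:ℝ) * |(V:ℝ)|) ≤ 2 * A * ((n:ℝ) * |(V:ℝ)|) := by nlinarith
          have hcast : (((n:ℤ) * |V| : ℤ) : ℝ) = (n:ℝ) * |(V:ℝ)| := by push_cast; ring
          have hCd : ((n:ℝ) * |(V:ℝ)|) ^ d * ‖p n d i‖ ≤ C := by
            have := hC n d i
            rwa [hcast] at this
          calc ‖p n d i‖ * (A + (n:ℝ) * |(V:ℝ)|) ^ d
              ≤ ‖p n d i‖ * (2 * A * ((n:ℝ) * |(V:ℝ)|)) ^ d := by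
                refine mul_le_mul_of_nonneg_left (pow_le_pow_left₀ ?_ hkey d) (norm_nonneg _)
                have := hnVnn n; linarith
            _ = (2 * A) ^ d * (((n:ℝ) * |(V:ℝ)|) ^ d * ‖p n d i‖) := by
                rw [mul_pow]; ring
            _ ≤ (2 * A) ^ D * C1 := by
                refine mul_le_mul (pow_le_pow_right₀ (by linarith) hdD) ?_ ?_ (by positivity)
                · exact hCd.trans (le_max_left C 1)
                · positivity
            _ ≤ E := by
                rw [hEdef]
                exact mul_le_mul_of_nonneg_left (by linarith) (by positivity)
  set b : ℝ := ((D:ℝ)+1) * S.card * E with hbdef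
  have hScard : 1 ≤ (S.card : ℝ) := by
    have : 0 < S.card := Finset.card_pos.mpr ⟨0, by rw [hS, Finset.mem_Icc]; omega⟩
    exact_mod_cast this
  have hb1 : 1 ≤ b := by
    have hD0 : (0:ℝ) ≤ (D:ℝ) := Nat.cast_nonneg D
    have h1 : (1:ℝ) ≤ ((D:ℝ)+1) * (S.card:ℝ) := by nlinarith
    rw [hbdef]
    nlinarith
  -- the recursion step bound
  have hstep : ∀ (n : ℕ) (L : ℝ), 0 ≤ L → (∀ j, ‖l n j‖ ≤ L) →
      ∀ j, ‖l (n+1) j‖ ≤ b * L := by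
    intro n L hL hLb j
    rw [hrec]
    calc ‖∑ d ∈ Finset.range (D + 1), lmul (p n d) (lderiv^[d] (l n)) j‖
        ≤ ∑ d ∈ Finset.range (D + 1), ‖lmul (p n d) (lderiv^[d] (l n)) j‖ :=
          norm_sum_le _ _
      _ ≤ ∑ _d ∈ Finset.range (D + 1), (S.card : ℝ) * (E * L) := by
          refine Finset.sum_le_sum fun d hd => ?_
          have hdD : d ≤ D := by have := Finset.mem_range.mp hd; omega
          rw [hlm n d hdD]
          calc ‖∑ i ∈ S, p n d i * lderiv^[d] (l n) (j - i)‖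
              ≤ ∑ i ∈ S, ‖p n d i * lderiv^[d] (l n) (j - i)‖ :=
                norm_sum_le _ _
            _ ≤ ∑ _i ∈ S, (E * L) := by
                refine Finset.sum_le_sum fun i hi => ?_
                rw [norm_mul]
                calc ‖p n d i‖ * ‖lderiv^[d] (l n) (j - i)‖
                    ≤ ‖p n d i‖ * ((A + n * |(V:ℝ)|) ^ d * L) :=
                      mul_le_mul_of_nonneg_left (hderivb n L hL hLb d hdD _)
                        (norm_nonneg _)
                  _ = (‖p n d i‖ * (A + n * |(V:ℝ)|) ^ d) * L := by ring
                  _ ≤ E * L := mul_le_mul_of_nonneg_right (hterm n d hdD i hi) hL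
            _ = (S.card : ℝ) * (E * L) := by rw [Finset.sum_const, nsmul_eq_mul]
      _ = b * L := by
          rw [Finset.sum_const, Finset.card_range, nsmul_eq_mul, hbdef]
          push_cast
          ring
  set L0 : ℝ := 1 + ∑ j ∈ Finset.Icc Vl Dl, ‖l 0 j‖ with hL0def
  have hsum0 : (0:ℝ) ≤ ∑ j ∈ Finset.Icc Vl Dl, ‖l 0 j‖ :=
    Finset.sum_nonneg fun _ _ => norm_nonneg _
  have hL01 : 1 ≤ L0 := by rw [hL0def]; linarith
  have hL00 : 0 ≤ L0 := by linarith
  have hl0b : ∀ j, ‖l 0 j‖ ≤ L0 := by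
    intro j
    by_cases hj : j ∈ Finset.Icc Vl Dl
    · have := Finset.single_le_sum (f := fun j => ‖l 0 j‖)
        (fun _ _ => norm_nonneg _) hj
      rw [hL0def]; linarith
    · rw [Finset.mem_Icc] at hj
      push_neg at hj
      rcases lt_or_ge Dl j with h | h
      · rw [hdeg0 j h, norm_zero]; linarith
      · have hjv : j < Vl := by
          by_contra hc
          push_neg at hc
          exact absurd h (not_le.mpr (hj hc))
        rw [hval0 j hjv, norm_zero]; linarith
  have hmain : ∀ n : ℕ, ∀ j : ℤ, ‖l n j‖ ≤ L0 * b ^ n := by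
    intro n
    induction n with
    | zero => intro j; simpa using hl0b j
    | succ n ih =>
      intro j
      have hpos : (0:ℝ) ≤ L0 * b ^ n := mul_nonneg hL00 (pow_nonneg (by linarith) n)
      calc ‖l (n+1) j‖ ≤ b * (L0 * b ^ n) := hstep n (L0 * b ^ n) hpos ih j
        _ = L0 * b ^ (n+1) := by ring
  refine ⟨L0, b, hL01, hb1, hmain, fun j => ?_⟩
  have hle : ∀ n : ℕ, ‖l n (j - n)‖ / (2 * b) ^ n ≤ L0 * (1/2) ^ n := by
    intro n
    have h2b : (0:ℝ) < (2 * b) ^ n := pow_pos (by linarith) n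
    rw [div_le_iff₀ h2b]
    have hhalf : (1/2 : ℝ) * (2 * b) = b := by ring
    calc ‖l n (j - n)‖ ≤ L0 * b ^ n := hmain n _
      _ = L0 * (1/2) ^ n * (2 * b) ^ n := by
          rw [mul_assoc, ← mul_pow, hhalf]
  have hgeo : Summable fun n : ℕ => L0 * (1/2 : ℝ) ^ n :=
    (summable_geometric_of_lt_one (by norm_num) (by norm_num)).mul_left L0
  have hnn : ∀ n : ℕ, (0:ℝ) ≤ ‖l n (j - n)‖ / (2 * b) ^ n := fun n =>
    div_nonneg (norm_nonneg _) (pow_nonneg (by linarith) n)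
  have hsummable : Summable fun n : ℕ => ‖l n (j - n)‖ / (2 * b) ^ n :=
    Summable.of_nonneg_of_le hnn hle hgeo
  refine ⟨hsummable, ?_⟩
  calc (∑' n : ℕ, ‖l n (j - n)‖ / (2 * b) ^ n)
      ≤ ∑' n : ℕ, L0 * (1/2 : ℝ) ^ n := Summable.tsum_le_tsum hle hsummable hgeo
    _ = L0 * (1 - 1/2 : ℝ)⁻¹ := by
        rw [tsum_mul_left, tsum_geometric_of_lt_one (by norm_num) (by norm_num)]
    _ = L0 * 2 := by norm_num
    _ = 2 * L0 := by ring
end
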